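/- Let α ∈ (1,2) and let G, G₀ : [0,∞) → [0,∞) be two measurable functions each satisfying the nonlinear delay equation H(θ) = ∫_0^θ exp{ − (α/(α−1)) ∫_0^1 H(r u^{1/(α−1)})^{α−1} u^{−1} du } dr for all θ ≥ 0. Define F(θ) := |G(θ)^{α−1} − G₀(θ)^{α−1}|^{1/(α−1)}. Then F(θ) ≤ α^{1/(α−1)} ∫_0^θ ( ∫_0^1 F(r u^{1/(α−1)})^{α−1} u^{−1} du )^{1/(α−1)} dr for all θ ≥ 0. -/

import Mathlib

open MeasureTheory Filter Real Set

/-- `|e^{-x} - e^{-y}| ≤ |x - y|` for nonnegative `x, y`. -/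
lemma aux_exp_abs_sub {x y : ℝ} (hx : 0 ≤ x) (hy : 0 ≤ y) :
    |Real.exp (-x) - Real.exp (-y)| ≤ |x - y| := by
  wlog h : y ≤ x generalizing x y
  · rw [abs_sub_comm, abs_sub_comm x y]; exact this hy hx (le_of_not_ge h)
  · have h1 : Real.exp (-x) = Real.exp (-y) * Real.exp (y - x) := by
      rw [← Real.exp_add]; ring_nf
    have h2 : (y - x) + 1 ≤ Real.exp (y - x) := Real.add_one_le_exp _
    have h3 : Real.exp (-y) ≤ 1 := Real.exp_le_one_iff.2 (by linarith)
    have h4 : (0:ℝ) < Real.exp (-y) := Real.exp_pos _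
    have h5 : Real.exp (y - x) ≤ 1 := Real.exp_le_one_iff.2 (by linarith)
    have h6 : Real.exp (-x) ≤ Real.exp (-y) := by nlinarith
    rw [abs_of_nonpos (by linarith), abs_of_nonneg (by linarith)]
    nlinarith

/-- Bounded measurable functions are integrable on finite-measure sets. -/
lemma aux_int_on {f : ℝ → ℝ} {s : Set ℝ} (hs : MeasurableSet s) (hμ : volume s < ⊤)
    (hf : Measurable f) {C : ℝ} (hC : ∀ x ∈ s, |f x| ≤ C) : IntegrableOn f s := by
  refine Integrable.mono' (g := fun _ => C) ?_ hf.aestronglyMeasurable ?_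
  · exact integrableOn_const hμ.ne
  · exact (ae_restrict_iff' hs).2 (ae_of_all _ (by simpa [Real.norm_eq_abs] using hC))

/-- Minkowski-type inequality for real integrals: if `f ≤ g + d` a.e. with all nonnegative,
then `(∫ f^p)^{1/p} ≤ (∫ g^p)^{1/p} + (∫ d^p)^{1/p}` for `p ≥ 1`. -/
lemma aux_mink {μ : Measure ℝ} {f g d : ℝ → ℝ} {p : ℝ} (hp : 1 ≤ p)
    (hfm : Measurable f) (hgm : Measurable g) (hdm : Measurable d)
    (hf0 : ∀ᵐ x ∂μ, 0 ≤ f x) (hg0 : ∀ᵐ x ∂μ, 0 ≤ g x) (hd0 : ∀ᵐ x ∂μ, 0 ≤ d x)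
    (hle : ∀ᵐ x ∂μ, f x ≤ g x + d x)
    (hfi : Integrable (fun x => f x ^ p) μ)
    (hgi : Integrable (fun x => g x ^ p) μ)
    (hdi : Integrable (fun x => d x ^ p) μ) :
    (∫ x, f x ^ p ∂μ) ^ (1/p) ≤ (∫ x, g x ^ p ∂μ) ^ (1/p) + (∫ x, d x ^ p ∂μ) ^ (1/p) := by
  have hp0 : 0 ≤ p := le_trans zero_le_one hp
  have key : ∀ (h : ℝ → ℝ), (∀ᵐ x ∂μ, 0 ≤ h x) → Integrable (fun x => h x ^ p) μ →
      ENNReal.ofReal (∫ x, h x ^ p ∂μ) = ∫⁻ x, (ENNReal.ofReal (h x)) ^ p ∂μ := by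
    intro h h0 hi
    rw [ofReal_integral_eq_lintegral_ofReal hi (h0.mono fun x hx => Real.rpow_nonneg hx p)]
    refine lintegral_congr_ae (h0.mono fun x hx => ?_)
    show ENNReal.ofReal (h x ^ p) = ENNReal.ofReal (h x) ^ p
    rw [ENNReal.ofReal_rpow_of_nonneg hx hp0]
  have hFm : AEMeasurable (fun x => ENNReal.ofReal (f x)) μ :=
    (ENNReal.measurable_ofReal.comp hfm).aemeasurable
  have hGm : AEMeasurable (fun x => ENNReal.ofReal (g x)) μ :=
    (ENNReal.measurable_ofReal.comp hgm).aemeasurable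
  have hDm : AEMeasurable (fun x => ENNReal.ofReal (d x)) μ :=
    (ENNReal.measurable_ofReal.comp hdm).aemeasurable
  have hmono : (∫⁻ x, (ENNReal.ofReal (f x)) ^ p ∂μ) ≤
      ∫⁻ x, ((fun x => ENNReal.ofReal (g x)) + fun x => ENNReal.ofReal (d x)) x ^ p ∂μ := by
    refine lintegral_mono_ae ?_
    filter_upwards [hle, hg0, hd0] with x h1 h2 h3
    refine ENNReal.rpow_le_rpow ?_ hp0
    simp only [Pi.add_apply]
    rw [← ENNReal.ofReal_add h2 h3]
    exact ENNReal.ofReal_le_ofReal h1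
  have hmink := ENNReal.lintegral_Lp_add_le hGm hDm hp
  have chain : (∫⁻ x, (ENNReal.ofReal (f x)) ^ p ∂μ) ^ (1/p) ≤
      (∫⁻ x, (ENNReal.ofReal (g x)) ^ p ∂μ) ^ (1/p) +
      (∫⁻ x, (ENNReal.ofReal (d x)) ^ p ∂μ) ^ (1/p) :=
    le_trans (ENNReal.rpow_le_rpow hmono (by positivity)) hmink
  have hfK := key f hf0 hfi
  have hgK := key g hg0 hgi
  have hdK := key d hd0 hdi
  rw [← hfK, ← hgK, ← hdK] at chain
  have hne : (ENNReal.ofReal (∫ x, g x ^ p ∂μ)) ^ (1/p) +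
      (ENNReal.ofReal (∫ x, d x ^ p ∂μ)) ^ (1/p) ≠ ⊤ := by
    exact ENNReal.add_ne_top.2
      ⟨ENNReal.rpow_ne_top_of_nonneg (by positivity) ENNReal.ofReal_ne_top,
       ENNReal.rpow_ne_top_of_nonneg (by positivity) ENNReal.ofReal_ne_top⟩
  have := ENNReal.toReal_mono hne chain
  have hig : 0 ≤ ∫ x, g x ^ p ∂μ :=
    integral_nonneg_of_ae (hg0.mono fun x hx => Real.rpow_nonneg hx p)
  have hid : 0 ≤ ∫ x, d x ^ p ∂μ :=
    integral_nonneg_of_ae (hd0.mono fun x hx => Real.rpow_nonneg hx p)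
  have hif : 0 ≤ ∫ x, f x ^ p ∂μ :=
    integral_nonneg_of_ae (hf0.mono fun x hx => Real.rpow_nonneg hx p)
  rw [ENNReal.toReal_add
    (ENNReal.rpow_ne_top_of_nonneg (by positivity) ENNReal.ofReal_ne_top)
    (ENNReal.rpow_ne_top_of_nonneg (by positivity) ENNReal.ofReal_ne_top)] at this
  rw [← ENNReal.toReal_rpow, ← ENNReal.toReal_rpow, ← ENNReal.toReal_rpow,
    ENNReal.toReal_ofReal hif, ENNReal.toReal_ofReal hig, ENNReal.toReal_ofReal hid] at this
  exact this

/-- Measurability of the inner integral as a function of `r`. -/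
lemma aux_meas {H : ℝ → ℝ} (hH : Measurable H) (c e : ℝ) :
    Measurable (fun r : ℝ => ∫ u in Set.Ioo (0:ℝ) 1, H (r * u ^ c) ^ e * u⁻¹) := by
  have h1 : Measurable (fun q : ℝ × ℝ => H (q.1 * q.2 ^ c) ^ e * q.2⁻¹) := by
    exact ((hH.comp (measurable_fst.mul (measurable_snd.pow measurable_const))).pow
      measurable_const).mul measurable_snd.inv
  exact (h1.stronglyMeasurable.integral_prod_right').measurable

/-- Any nonnegative solution of the delay equation satisfies `G s ≤ s`. -/
lemma aux_sol_le (α : ℝ) (hα1 : 1 < α) (G : ℝ → ℝ) (hGmeas : Measurable G)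
    (hGnn : ∀ θ ≥ (0:ℝ), 0 ≤ G θ)
    (hGeq : ∀ θ ≥ (0 : ℝ), G θ = ∫ r in Set.Ioo 0 θ,
      Real.exp (-(α / (α - 1)) *
        ∫ u in Set.Ioo (0:ℝ) 1, G (r * u ^ (1 / (α - 1))) ^ (α - 1) * u⁻¹)) :
    ∀ s ≥ (0:ℝ), G s ≤ s := by
  intro s hs
  have hβ0 : (0:ℝ) < α - 1 := by linarith
  have hc : (0:ℝ) ≤ α / (α - 1) := by positivity
  have hIG : ∀ r ∈ Set.Ioo (0:ℝ) s,
      0 ≤ ∫ u in Set.Ioo (0:ℝ) 1, G (r * u ^ (1 / (α - 1))) ^ (α - 1) * u⁻¹ := by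
    intro r hr
    refine setIntegral_nonneg measurableSet_Ioo fun u hu => ?_
    have harg : 0 ≤ r * u ^ (1 / (α - 1)) :=
      mul_nonneg hr.1.le (Real.rpow_nonneg hu.1.le _)
    exact mul_nonneg (Real.rpow_nonneg (hGnn _ harg) _) (inv_nonneg.2 hu.1.le)
  have hbound : ∀ r ∈ Set.Ioo (0:ℝ) s,
      Real.exp (-(α / (α - 1)) *
        ∫ u in Set.Ioo (0:ℝ) 1, G (r * u ^ (1 / (α - 1))) ^ (α - 1) * u⁻¹) ≤ 1 := by
    intro r hr
    refine Real.exp_le_one_iff.2 ?_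
    have := mul_nonneg hc (hIG r hr)
    linarith
  have hmeas : Measurable (fun r : ℝ => Real.exp (-(α / (α - 1)) *
      ∫ u in Set.Ioo (0:ℝ) 1, G (r * u ^ (1 / (α - 1))) ^ (α - 1) * u⁻¹)) :=
    (((aux_meas hGmeas (1/(α-1)) (α-1)).const_mul (-(α / (α - 1))))).exp
  have hvol : volume (Set.Ioo (0:ℝ) s) < ⊤ := by
    rw [Real.volume_Ioo]; exact ENNReal.ofReal_lt_top
  have hint : IntegrableOn (fun r : ℝ => Real.exp (-(α / (α - 1)) *
      ∫ u in Set.Ioo (0:ℝ) 1, G (r * u ^ (1 / (α - 1))) ^ (α - 1) * u⁻¹)) (Set.Ioo 0 s) := by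
    refine aux_int_on measurableSet_Ioo hvol hmeas (C := 1) fun r hr => ?_
    rw [abs_of_pos (Real.exp_pos _)]
    exact hbound r hr
  rw [hGeq s hs]
  calc ∫ r in Set.Ioo (0:ℝ) s, Real.exp (-(α / (α - 1)) *
        ∫ u in Set.Ioo (0:ℝ) 1, G (r * u ^ (1 / (α - 1))) ^ (α - 1) * u⁻¹)
      ≤ ∫ _r in Set.Ioo (0:ℝ) s, (1:ℝ) :=
        setIntegral_mono_on hint (integrableOn_const hvol.ne) measurableSet_Ioo hbound
    _ = s := by
        rw [setIntegral_const, measureReal_def, Real.volume_Ioo, smul_eq_mul, mul_one, sub_zero,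
          ENNReal.toReal_ofReal hs]

/-- The key estimate in the uniqueness proof of Lemma A.2: if `G` and `G₀` are two measurable
nonnegative solutions of the nonlinear delay equation, then
`F(θ) := |G(θ)^{α-1} - G₀(θ)^{α-1}|^{1/(α-1)}` satisfies
`F(θ) ≤ α^{1/(α-1)} ∫_0^θ (∫_0^1 F(r u^{1/(α-1)})^{α-1} u⁻¹ du)^{1/(α-1)} dr`. -/
theorem stmt_14 (α : ℝ) (hα1 : 1 < α) (hα2 : α < 2)
    (G G₀ : ℝ → ℝ) (hGmeas : Measurable G) (hG₀meas : Measurable G₀)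
    (hGnonneg : ∀ θ ≥ (0 : ℝ), 0 ≤ G θ) (hG₀nonneg : ∀ θ ≥ (0 : ℝ), 0 ≤ G₀ θ)
    (hGeq : ∀ θ ≥ (0 : ℝ), G θ = ∫ r in Set.Ioo 0 θ,
      Real.exp (-(α / (α - 1)) *
        ∫ u in Set.Ioo (0:ℝ) 1, G (r * u ^ (1 / (α - 1))) ^ (α - 1) * u⁻¹))
    (hG₀eq : ∀ θ ≥ (0 : ℝ), G₀ θ = ∫ r in Set.Ioo 0 θ,
      Real.exp (-(α / (α - 1)) *
        ∫ u in Set.Ioo (0:ℝ) 1, G₀ (r * u ^ (1 / (α - 1))) ^ (α - 1) * u⁻¹))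
    (F : ℝ → ℝ)
    (hF : ∀ θ : ℝ, F θ = |G θ ^ (α - 1) - G₀ θ ^ (α - 1)| ^ (1 / (α - 1))) :
    ∀ θ ≥ (0 : ℝ), F θ ≤ α ^ (1 / (α - 1)) * ∫ r in Set.Ioo 0 θ,
      (∫ u in Set.Ioo (0:ℝ) 1, F (r * u ^ (1 / (α - 1))) ^ (α - 1) * u⁻¹) ^ (1 / (α - 1)) := by
  intro θ hθ
  have hβ0 : (0:ℝ) < α - 1 := by linarith
  have hβne : α - 1 ≠ 0 := ne_of_gt hβ0
  have hα0 : (0:ℝ) < α := by linarith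
  have hp1 : (1:ℝ) ≤ 1 / (α - 1) := by rw [le_div_iff₀ hβ0]; linarith
  have hp0 : (0:ℝ) ≤ 1 / (α - 1) := le_trans zero_le_one hp1
  have hGle := aux_sol_le α hα1 G hGmeas hGnonneg hGeq
  have hG₀le := aux_sol_le α hα1 G₀ hG₀meas hG₀nonneg hG₀eq
  -- basic facts about F
  have hFnn : ∀ s, 0 ≤ F s := fun s => (hF s) ▸ Real.rpow_nonneg (abs_nonneg _) _
  have hFmeas : Measurable F := by
    have hFdef : F = fun s => |G s ^ (α - 1) - G₀ s ^ (α - 1)| ^ (1 / (α - 1)) := funext hF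
    rw [hFdef]
    exact (((hGmeas.pow measurable_const).sub (hG₀meas.pow measurable_const)).abs).pow
      measurable_const
  have hFpow : ∀ s : ℝ, F s ^ (α - 1) = |G s ^ (α - 1) - G₀ s ^ (α - 1)| := by
    intro s
    rw [hF s, ← Real.rpow_mul (abs_nonneg _), one_div_mul_cancel hβne, Real.rpow_one]
  have hFle : ∀ s ≥ (0:ℝ), F s ≤ s := by
    intro s hs
    have h1 : 0 ≤ G s ^ (α - 1) := Real.rpow_nonneg (hGnonneg s hs) _
    have h2 : G s ^ (α - 1) ≤ s ^ (α - 1) :=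
      Real.rpow_le_rpow (hGnonneg s hs) (hGle s hs) hβ0.le
    have h3 : 0 ≤ G₀ s ^ (α - 1) := Real.rpow_nonneg (hG₀nonneg s hs) _
    have h4 : G₀ s ^ (α - 1) ≤ s ^ (α - 1) :=
      Real.rpow_le_rpow (hG₀nonneg s hs) (hG₀le s hs) hβ0.le
    calc F s = |G s ^ (α - 1) - G₀ s ^ (α - 1)| ^ (1 / (α - 1)) := hF s
      _ ≤ (s ^ (α - 1)) ^ (1 / (α - 1)) :=
          Real.rpow_le_rpow (abs_nonneg _) (abs_le.2 ⟨by linarith, by linarith⟩) hp0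
      _ = s := by rw [← Real.rpow_mul hs, mul_one_div_cancel hβne, Real.rpow_one]
  have hFnn' : ∀ s ≥ (0:ℝ), 0 ≤ F s := fun s _ => hFnn s
  -- bounds on the inner integrand
  have hinner : ∀ (H : ℝ → ℝ), (∀ t ≥ (0:ℝ), 0 ≤ H t) → (∀ t ≥ (0:ℝ), H t ≤ t) →
      ∀ r > (0:ℝ), ∀ u ∈ Set.Ioo (0:ℝ) 1,
        0 ≤ H (r * u ^ (1 / (α - 1))) ^ (α - 1) * u⁻¹ ∧
        H (r * u ^ (1 / (α - 1))) ^ (α - 1) * u⁻¹ ≤ r ^ (α - 1) := by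
    intro H h0 h1 r hr u hu
    have hu0 : (0:ℝ) < u := hu.1
    have hupow : 0 ≤ u ^ (1 / (α - 1)) := Real.rpow_nonneg hu0.le _
    have harg : 0 ≤ r * u ^ (1 / (α - 1)) := mul_nonneg hr.le hupow
    refine ⟨mul_nonneg (Real.rpow_nonneg (h0 _ harg) _) (inv_nonneg.2 hu0.le), ?_⟩
    have hb : H (r * u ^ (1 / (α - 1))) ^ (α - 1) ≤ (r * u ^ (1 / (α - 1))) ^ (α - 1) :=
      Real.rpow_le_rpow (h0 _ harg) (h1 _ harg) hβ0.le
    have heq : (r * u ^ (1 / (α - 1))) ^ (α - 1) = r ^ (α - 1) * u := by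
      rw [Real.mul_rpow hr.le hupow, ← Real.rpow_mul hu0.le, one_div_mul_cancel hβne,
        Real.rpow_one]
    rw [heq] at hb
    calc H (r * u ^ (1 / (α - 1))) ^ (α - 1) * u⁻¹ ≤ (r ^ (α - 1) * u) * u⁻¹ :=
          mul_le_mul_of_nonneg_right hb (inv_nonneg.2 hu0.le)
      _ = r ^ (α - 1) := by rw [mul_assoc, mul_inv_cancel₀ (ne_of_gt hu0), mul_one]
  have hIoo1 : volume (Set.Ioo (0:ℝ) 1) < ⊤ := by
    rw [Real.volume_Ioo]; exact ENNReal.ofReal_lt_top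
  have hintH : ∀ (H : ℝ → ℝ), Measurable H → (∀ t ≥ (0:ℝ), 0 ≤ H t) → (∀ t ≥ (0:ℝ), H t ≤ t) →
      ∀ r > (0:ℝ),
      IntegrableOn (fun u => H (r * u ^ (1 / (α - 1))) ^ (α - 1) * u⁻¹) (Set.Ioo 0 1) := by
    intro H hm h0 h1 r hr
    refine aux_int_on measurableSet_Ioo hIoo1 ?_ (C := r ^ (α - 1)) fun u hu => ?_
    · exact ((hm.comp (((measurable_id.pow measurable_const).const_mul r))).pow
        measurable_const).mul measurable_inv
    · rcases hinner H h0 h1 r hr u hu with ⟨ha, hb⟩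
      rw [abs_of_nonneg ha]; exact hb
  -- the inner integrals as functions of r
  set IG : ℝ → ℝ :=
    fun r => ∫ u in Set.Ioo (0:ℝ) 1, G (r * u ^ (1 / (α - 1))) ^ (α - 1) * u⁻¹ with hIGdef
  set IG₀ : ℝ → ℝ :=
    fun r => ∫ u in Set.Ioo (0:ℝ) 1, G₀ (r * u ^ (1 / (α - 1))) ^ (α - 1) * u⁻¹ with hIG₀def
  set JJ : ℝ → ℝ :=
    fun r => ∫ u in Set.Ioo (0:ℝ) 1, F (r * u ^ (1 / (α - 1))) ^ (α - 1) * u⁻¹ with hJdef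
  have hIGmeas : Measurable IG := by rw [hIGdef]; exact aux_meas hGmeas _ _
  have hIG₀meas : Measurable IG₀ := by rw [hIG₀def]; exact aux_meas hG₀meas _ _
  have hJmeas : Measurable JJ := by rw [hJdef]; exact aux_meas hFmeas _ _
  have hIGnn : ∀ r > (0:ℝ), 0 ≤ IG r := by
    intro r hr
    exact setIntegral_nonneg measurableSet_Ioo fun u hu =>
      (hinner G hGnonneg hGle r hr u hu).1
  have hIG₀nn : ∀ r > (0:ℝ), 0 ≤ IG₀ r := by
    intro r hr
    exact setIntegral_nonneg measurableSet_Ioo fun u hu =>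
      (hinner G₀ hG₀nonneg hG₀le r hr u hu).1
  have hJnn : ∀ r, 0 ≤ JJ r := by
    intro r
    exact setIntegral_nonneg measurableSet_Ioo fun u hu =>
      mul_nonneg (Real.rpow_nonneg (hFnn _) _) (inv_nonneg.2 hu.1.le)
  have hJle : ∀ r, 0 < r → r < θ → JJ r ≤ θ ^ (α - 1) := by
    intro r hr hrθ
    have h1 : JJ r ≤ ∫ _u in Set.Ioo (0:ℝ) 1, r ^ (α - 1) :=
      setIntegral_mono_on (hintH F hFmeas hFnn' hFle r hr)
        (integrableOn_const hIoo1.ne) measurableSet_Ioo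
        (fun u hu => (hinner F hFnn' hFle r hr u hu).2)
    have h2 : ∫ _u in Set.Ioo (0:ℝ) 1, r ^ (α - 1) = r ^ (α - 1) := by
      rw [setIntegral_const, measureReal_def, Real.volume_Ioo, sub_zero, ENNReal.toReal_ofReal zero_le_one,
        one_smul]
    have h3 : r ^ (α - 1) ≤ θ ^ (α - 1) := Real.rpow_le_rpow hr.le hrθ.le hβ0.le
    linarith [h1, h2 ▸ h1]
  -- |IG - IG₀| ≤ JJ
  have hdiff : ∀ r, 0 < r → |IG r - IG₀ r| ≤ JJ r := by
    intro r hr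
    have hi1 := hintH G hGmeas hGnonneg hGle r hr
    have hi2 := hintH G₀ hG₀meas hG₀nonneg hG₀le r hr
    rw [hIGdef, hIG₀def, hJdef]
    simp only
    rw [← integral_sub hi1 hi2]
    calc |∫ u in Set.Ioo (0:ℝ) 1,
          (G (r * u ^ (1 / (α - 1))) ^ (α - 1) * u⁻¹ -
           G₀ (r * u ^ (1 / (α - 1))) ^ (α - 1) * u⁻¹)|
        ≤ ∫ u in Set.Ioo (0:ℝ) 1,
          |G (r * u ^ (1 / (α - 1))) ^ (α - 1) * u⁻¹ -
           G₀ (r * u ^ (1 / (α - 1))) ^ (α - 1) * u⁻¹| := by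
          simpa [Real.norm_eq_abs] using
            norm_integral_le_integral_norm (μ := volume.restrict (Set.Ioo (0:ℝ) 1))
              (fun u => G (r * u ^ (1 / (α - 1))) ^ (α - 1) * u⁻¹ -
                G₀ (r * u ^ (1 / (α - 1))) ^ (α - 1) * u⁻¹)
      _ = ∫ u in Set.Ioo (0:ℝ) 1, F (r * u ^ (1 / (α - 1))) ^ (α - 1) * u⁻¹ := by
          refine setIntegral_congr_fun measurableSet_Ioo fun u hu => ?_
          rw [← sub_mul, abs_mul, abs_of_nonneg (inv_nonneg.2 hu.1.le), ← hFpow]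
  -- the three functions for Minkowski
  have hSmeas : MeasurableSet (Set.Ioo (0:ℝ) θ) := measurableSet_Ioo
  have hSvol : volume (Set.Ioo (0:ℝ) θ) < ⊤ := by
    rw [Real.volume_Ioo]; exact ENNReal.ofReal_lt_top
  have hexp_rpow : ∀ t s : ℝ, Real.exp t ^ s = Real.exp (t * s) :=
    fun t s => (Real.exp_mul t s).symm
  have hfp : ∀ x : ℝ, Real.exp (-(α * x)) ^ (1 / (α - 1)) = Real.exp (-(α / (α - 1)) * x) := by
    intro x
    rw [hexp_rpow]
    congr 1
    field_simp
  have hfmeas : Measurable fun r => Real.exp (-(α * IG r)) :=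
    ((hIGmeas.const_mul α).neg).exp
  have hgmeas : Measurable fun r => Real.exp (-(α * IG₀ r)) :=
    ((hIG₀meas.const_mul α).neg).exp
  have hdmeas : Measurable fun r => α * JJ r := hJmeas.const_mul α
  have hexpint : ∀ (I : ℝ → ℝ), Measurable I → (∀ r > (0:ℝ), 0 ≤ I r) →
      IntegrableOn (fun r => Real.exp (-(α * I r)) ^ (1 / (α - 1))) (Set.Ioo 0 θ) := by
    intro I hIm hInn
    refine aux_int_on hSmeas hSvol ?_ (C := 1) fun r hr => ?_
    · exact (((hIm.const_mul α).neg).exp).pow measurable_const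
    · rw [hfp, abs_of_pos (Real.exp_pos _)]
      refine Real.exp_le_one_iff.2 ?_
      have h1 : (0:ℝ) ≤ α / (α - 1) := by positivity
      have := mul_nonneg h1 (hInn r hr.1)
      linarith
  have hfint := hexpint IG hIGmeas hIGnn
  have hgint := hexpint IG₀ hIG₀meas hIG₀nn
  have hdint : IntegrableOn (fun r => (α * JJ r) ^ (1 / (α - 1))) (Set.Ioo 0 θ) := by
    refine aux_int_on hSmeas hSvol ?_ (C := (α * θ ^ (α - 1)) ^ (1 / (α - 1))) fun r hr => ?_
    · exact hdmeas.pow measurable_const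
    · rw [abs_of_nonneg (Real.rpow_nonneg (mul_nonneg hα0.le (hJnn r)) _)]
      refine Real.rpow_le_rpow (mul_nonneg hα0.le (hJnn r)) ?_ hp0
      exact mul_le_mul_of_nonneg_left (hJle r hr.1 hr.2) hα0.le
  -- a.e. inequalities
  have haele : ∀ᵐ r ∂(volume.restrict (Set.Ioo (0:ℝ) θ)),
      Real.exp (-(α * IG r)) ≤ Real.exp (-(α * IG₀ r)) + α * JJ r := by
    refine (ae_restrict_iff' hSmeas).2 (ae_of_all _ fun r hr => ?_)
    have h1 := aux_exp_abs_sub (mul_nonneg hα0.le (hIGnn r hr.1))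
      (mul_nonneg hα0.le (hIG₀nn r hr.1))
    have h2 : |α * IG r - α * IG₀ r| = α * |IG r - IG₀ r| := by
      rw [← mul_sub, abs_mul, abs_of_nonneg hα0.le]
    have h3 := hdiff r hr.1
    have h4 : Real.exp (-(α * IG r)) - Real.exp (-(α * IG₀ r)) ≤
        |Real.exp (-(α * IG r)) - Real.exp (-(α * IG₀ r))| := le_abs_self _
    have h5 : α * |IG r - IG₀ r| ≤ α * JJ r := mul_le_mul_of_nonneg_left h3 hα0.le
    rw [h2] at h1
    linarith
  have haele' : ∀ᵐ r ∂(volume.restrict (Set.Ioo (0:ℝ) θ)),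
      Real.exp (-(α * IG₀ r)) ≤ Real.exp (-(α * IG r)) + α * JJ r := by
    refine (ae_restrict_iff' hSmeas).2 (ae_of_all _ fun r hr => ?_)
    have h1 := aux_exp_abs_sub (mul_nonneg hα0.le (hIGnn r hr.1))
      (mul_nonneg hα0.le (hIG₀nn r hr.1))
    have h2 : |α * IG r - α * IG₀ r| = α * |IG r - IG₀ r| := by
      rw [← mul_sub, abs_mul, abs_of_nonneg hα0.le]
    have h3 := hdiff r hr.1
    have h4 : Real.exp (-(α * IG₀ r)) - Real.exp (-(α * IG r)) ≤
        |Real.exp (-(α * IG r)) - Real.exp (-(α * IG₀ r))| := by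
      rw [abs_sub_comm]; exact le_abs_self _
    have h5 : α * |IG r - IG₀ r| ≤ α * JJ r := mul_le_mul_of_nonneg_left h3 hα0.le
    rw [h2] at h1
    linarith
  have hfnn0 : ∀ᵐ r ∂(volume.restrict (Set.Ioo (0:ℝ) θ)), 0 ≤ Real.exp (-(α * IG r)) :=
    ae_of_all _ fun r => (Real.exp_pos _).le
  have hgnn0 : ∀ᵐ r ∂(volume.restrict (Set.Ioo (0:ℝ) θ)), 0 ≤ Real.exp (-(α * IG₀ r)) :=
    ae_of_all _ fun r => (Real.exp_pos _).le
  have hdnn0 : ∀ᵐ r ∂(volume.restrict (Set.Ioo (0:ℝ) θ)), 0 ≤ α * JJ r :=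
    ae_of_all _ fun r => mul_nonneg hα0.le (hJnn r)
  have mink1 := aux_mink hp1 hfmeas hgmeas hdmeas hfnn0 hgnn0 hdnn0 haele hfint hgint hdint
  have mink2 := aux_mink hp1 hgmeas hfmeas hdmeas hgnn0 hfnn0 hdnn0 haele' hgint hfint hdint
  rw [one_div_one_div] at mink1 mink2
  -- identify G θ and G₀ θ
  have hGA : G θ = ∫ r in Set.Ioo (0:ℝ) θ, Real.exp (-(α * IG r)) ^ (1 / (α - 1)) := by
    rw [hGeq θ hθ]
    refine setIntegral_congr_fun hSmeas fun r _ => ?_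
    rw [hfp]
  have hGB : G₀ θ = ∫ r in Set.Ioo (0:ℝ) θ, Real.exp (-(α * IG₀ r)) ^ (1 / (α - 1)) := by
    rw [hG₀eq θ hθ]
    refine setIntegral_congr_fun hSmeas fun r _ => ?_
    rw [hfp]
  have hDnn : 0 ≤ ∫ r in Set.Ioo (0:ℝ) θ, (α * JJ r) ^ (1 / (α - 1)) :=
    integral_nonneg fun r => Real.rpow_nonneg (mul_nonneg hα0.le (hJnn r)) _
  have habs : |G θ ^ (α - 1) - G₀ θ ^ (α - 1)| ≤
      (∫ r in Set.Ioo (0:ℝ) θ, (α * JJ r) ^ (1 / (α - 1))) ^ (α - 1) := by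
    rw [hGA, hGB]
    exact abs_sub_le_iff.2 ⟨by linarith, by linarith⟩
  have hFθ : F θ ≤ ∫ r in Set.Ioo (0:ℝ) θ, (α * JJ r) ^ (1 / (α - 1)) := by
    rw [hF θ]
    calc |G θ ^ (α - 1) - G₀ θ ^ (α - 1)| ^ (1 / (α - 1))
        ≤ ((∫ r in Set.Ioo (0:ℝ) θ, (α * JJ r) ^ (1 / (α - 1))) ^ (α - 1)) ^ (1 / (α - 1)) :=
          Real.rpow_le_rpow (abs_nonneg _) habs hp0
      _ = ∫ r in Set.Ioo (0:ℝ) θ, (α * JJ r) ^ (1 / (α - 1)) := by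
          rw [← Real.rpow_mul hDnn, mul_one_div_cancel hβne, Real.rpow_one]
  have hsplit : (∫ r in Set.Ioo (0:ℝ) θ, (α * JJ r) ^ (1 / (α - 1))) =
      α ^ (1 / (α - 1)) * ∫ r in Set.Ioo (0:ℝ) θ, JJ r ^ (1 / (α - 1)) := by
    rw [← integral_const_mul]
    refine setIntegral_congr_fun hSmeas fun r _ => ?_
    exact Real.mul_rpow hα0.le (hJnn r)
  rw [hsplit] at hFθ
  have hgoal : F θ ≤ α ^ (1 / (α - 1)) * ∫ r in Set.Ioo (0:ℝ) θ,
      (JJ r) ^ (1 / (α - 1)) := hFθ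
  simpa only [hJdef] using hgoal
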